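/- Suppose ψ : (0,∞) → (0,∞) is twice differentiable with ψ'(ξ) > 0 for all ξ > 0, and for some α > 0 and all ξ > 0 one has -ξψ''(ξ)/ψ'(ξ) ≤ 1 - α/2. Then for all ξ > 0, ξψ'(ξ)/(ψ(ξ) - ψ(0⁺)) ≥ α/2, where ψ(0⁺) denotes the limit of ψ at 0 from the right. -/
import Mathlib


open Filter Set

theorem scaling_lower_ratio (ψ ψ' ψ'' : ℝ → ℝ) (α ψ0 : ℝ) (hα : 0 < α)
    (hd1 : ∀ ξ ∈ Set.Ioi (0:ℝ), HasDerivAt ψ (ψ' ξ) ξ)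
    (hd2 : ∀ ξ ∈ Set.Ioi (0:ℝ), HasDerivAt ψ' (ψ'' ξ) ξ)
    (hpos : ∀ ξ ∈ Set.Ioi (0:ℝ), 0 < ψ ξ)
    (hd1pos : ∀ ξ ∈ Set.Ioi (0:ℝ), 0 < ψ' ξ)
    (hscal : ∀ ξ ∈ Set.Ioi (0:ℝ), -ξ * ψ'' ξ / ψ' ξ ≤ 1 - α / 2)
    (hlim : Tendsto ψ (nhdsWithin 0 (Set.Ioi 0)) (nhds ψ0)) :
    ∀ ξ ∈ Set.Ioi (0:ℝ), α / 2 ≤ ξ * ψ' ξ / (ψ ξ - ψ0) := by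
  -- auxiliary function g
  set g : ℝ → ℝ := fun t => t * ψ' t - α / 2 * (ψ t - ψ0) with hgdef
  have hg : ∀ t ∈ Set.Ioi (0:ℝ), HasDerivAt g (1 * ψ' t + t * ψ'' t - α / 2 * ψ' t) t := by
    intro t ht
    exact ((hasDerivAt_id t).mul (hd2 t ht)).sub (((hd1 t ht).sub_const ψ0).const_mul (α/2))
  have hgderiv : ∀ t ∈ Set.Ioi (0:ℝ), 0 ≤ 1 * ψ' t + t * ψ'' t - α / 2 * ψ' t := by
    intro t ht
    have hp := hd1pos t ht
    have h := (div_le_iff₀ hp).mp (hscal t ht)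
    nlinarith
  -- g is monotone on Ioi 0
  have hgmono : MonotoneOn g (Set.Ioi (0:ℝ)) := by
    apply monotoneOn_of_deriv_nonneg (convex_Ioi 0)
    · exact fun t ht => (hg t ht).continuousAt.continuousWithinAt
    · rw [interior_Ioi]
      exact fun t ht => (hg t ht).differentiableAt.differentiableWithinAt
    · rw [interior_Ioi]
      intro t ht
      rw [(hg t ht).deriv]
      exact hgderiv t ht
  -- ψ is strictly monotone on Ioi 0
  have hψmono : StrictMonoOn ψ (Set.Ioi (0:ℝ)) := by
    apply StrictMonoOn.mono (s := Set.Ioi (0:ℝ)) ?_ (le_refl _)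
    apply strictMonoOn_of_deriv_pos (convex_Ioi 0)
    · exact fun t ht => (hd1 t ht).continuousAt.continuousWithinAt
    · rw [interior_Ioi]
      intro t ht
      rw [(hd1 t ht).deriv]
      exact hd1pos t ht
  -- ψ0 ≤ ψ t for t > 0
  have hψ0le : ∀ t ∈ Set.Ioi (0:ℝ), ψ0 ≤ ψ t := by
    intro t ht
    apply le_of_tendsto hlim
    filter_upwards [Ioo_mem_nhdsGT_of_mem ⟨le_refl (0:ℝ), ht⟩] with s hs
    exact (hψmono.monotoneOn hs.1 ht hs.2.le)
  -- 0 ≤ g ξ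
  intro ξ hξ
  have hgnn : 0 ≤ g ξ := by
    have htend : Tendsto (fun t => -(α/2) * (ψ t - ψ0)) (nhdsWithin 0 (Set.Ioi 0))
        (nhds (-(α/2) * (ψ0 - ψ0))) := ((hlim.sub_const ψ0).const_mul _)
    simp only [sub_self, mul_zero] at htend
    apply le_of_tendsto htend
    filter_upwards [Ioo_mem_nhdsGT_of_mem ⟨le_refl (0:ℝ), hξ⟩] with t ht
    have h1 : -(α/2) * (ψ t - ψ0) ≤ g t := by
      have : 0 ≤ t * ψ' t := le_of_lt (mul_pos ht.1 (hd1pos t ht.1))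
      simp only [hgdef]
      nlinarith
    exact h1.trans (hgmono ht.1 hξ ht.2.le)
  -- ψ ξ > ψ0
  have hhalf : (ξ/2) ∈ Set.Ioi (0:ℝ) := by
    simp only [Set.mem_Ioi] at hξ ⊢; linarith
  have hψξ : ψ0 < ψ ξ := lt_of_le_of_lt (hψ0le _ hhalf)
    (hψmono hhalf hξ (by simp only [Set.mem_Ioi] at hξ; linarith))
  rw [le_div_iff₀ (by linarith)]
  simp only [hgdef] at hgnn
  linarith
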